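/- Let A, B be bounded linear operators on G. The linear relation Λ^{A,B} is self-adjoint if and only if A B* = B A* and ker M^{A,B} = {0}. -/

import Mathlib

open ContinuousLinearMap

variable {G : Type*} [NormedAddCommGroup G] [InnerProductSpace ℂ G] [CompleteSpace G]

/-- The operator `M^{A,B}` on `G × G`, `(x₁,x₂) ↦ (A x₁ - B x₂, B x₁ + A x₂)`. -/
noncomputable def MAB (A B : G →L[ℂ] G) : (G × G) →L[ℂ] (G × G) :=
  ((A.comp (fst ℂ G G)) - (B.comp (snd ℂ G G))).prod
    ((B.comp (fst ℂ G G)) + (A.comp (snd ℂ G G)))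

/-- The linear relation `Λ^{A,B} = {(x₁,x₂) : A x₁ = B x₂}`. -/
def LambdaAB (A B : G →L[ℂ] G) : Submodule ℂ (G × G) where
  carrier := {p | A p.1 = B p.2}
  add_mem' := by
    intro a b ha hb
    simp only [Set.mem_setOf_eq] at *
    simp [ha, hb]
  zero_mem' := by simp
  smul_mem' := by
    intro c p hp
    simp only [Set.mem_setOf_eq] at *
    simp [hp]

/-- The adjoint of a linear relation. -/
def relAdjoint (Λ : Submodule ℂ (G × G)) : Submodule ℂ (G × G) where
  carrier := {p | ∀ q ∈ Λ, (inner ℂ p.1 q.2 : ℂ) = inner ℂ p.2 q.1}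
  add_mem' := by
    intro a b ha hb q hq
    simp [inner_add_left, ha q hq, hb q hq]
  zero_mem' := by
    intro q hq; simp
  smul_mem' := by
    intro c p hp q hq
    simp [inner_smul_left, hp q hq]

/-- A linear relation is self-adjoint if it equals its adjoint. -/
def IsSelfAdjointRel (Λ : Submodule ℂ (G × G)) : Prop := relAdjoint Λ = Λ

/-- A bounded operator is boundedly invertible if it has a bounded two-sided inverse. -/
def IsBoundedlyInvertible {E F : Type*} [NormedAddCommGroup E] [NormedSpace ℂ E]
    [NormedAddCommGroup F] [NormedSpace ℂ F] (T : E →L[ℂ] F) : Prop :=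
  ∃ T' : F →L[ℂ] E, (∀ x, T' (T x) = x) ∧ (∀ y, T (T' y) = y)

/-- The pair `(A,B)` is normalized if `A B* = B A*` and `M^{A,B}` is boundedly invertible. -/
noncomputable def IsNormalized (A B : G →L[ℂ] G) : Prop :=
  A ∘L adjoint B = B ∘L adjoint A ∧ IsBoundedlyInvertible (MAB A B)

/-- `Λ^{A,B}` is self-adjoint iff `A B* = B A*` and `ker M^{A,B} = 0`. -/
theorem lambdaAB_isSelfAdjointRel_iff (A B : G →L[ℂ] G) :
    IsSelfAdjointRel (LambdaAB A B) ↔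
      (A ∘L adjoint B = B ∘L adjoint A ∧ ∀ x : G × G, MAB A B x = 0 → x = 0) := by
  have hmem : ∀ p : G × G, p ∈ LambdaAB A B ↔ A p.1 = B p.2 := fun p => Iff.rfl
  have hMAB : ∀ x : G × G, MAB A B x = (A x.1 - B x.2, B x.1 + A x.2) := fun x => rfl
  -- range of N : y ↦ (B* y, A* y) is always contained in the adjoint relation
  have hN : ∀ y : G, ((adjoint B y, adjoint A y) : G × G) ∈ relAdjoint (LambdaAB A B) := by
    intro y q hq
    rw [hmem] at hq
    simp only [adjoint_inner_left, hq]
  constructor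
  · intro h
    have h1 : A ∘L adjoint B = B ∘L adjoint A := by
      ext y
      have hy := hN y
      rw [h, hmem] at hy
      simpa using hy
    refine ⟨h1, ?_⟩
    intro x hx
    rw [hMAB, Prod.ext_iff] at hx
    obtain ⟨hx1, hx2⟩ := hx
    have hx1' : A x.1 = B x.2 := sub_eq_zero.mp hx1
    have hxΛ : x ∈ LambdaAB A B := hx1'
    have hJ : ((x.2, -x.1) : G × G) ∈ LambdaAB A B := by
      rw [hmem]
      simp only [map_neg]
      exact eq_neg_of_add_eq_zero_right hx2
    rw [← h] at hJ
    have hkey := hJ x hxΛ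
    simp only [inner_neg_left] at hkey
    have h2 : (inner ℂ x.1 x.1 : ℂ) + inner ℂ x.2 x.2 = 0 := by rw [hkey]; ring
    rw [inner_self_eq_norm_sq_to_K, inner_self_eq_norm_sq_to_K] at h2
    have h3 : ‖x.1‖ ^ 2 + ‖x.2‖ ^ 2 = (0 : ℝ) := by
      have h2' : ((‖x.1‖ ^ 2 + ‖x.2‖ ^ 2 : ℝ) : ℂ) = 0 := by push_cast; exact h2
      exact_mod_cast h2'
    have h4 : ‖x.1‖ = 0 ∧ ‖x.2‖ = 0 := by
      constructor <;> nlinarith [sq_nonneg ‖x.1‖, sq_nonneg ‖x.2‖, norm_nonneg x.1, norm_nonneg x.2]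
    have hx1z : x.1 = 0 := norm_eq_zero.mp h4.1
    have hx2z : x.2 = 0 := norm_eq_zero.mp h4.2
    exact Prod.ext hx1z hx2z
  · rintro ⟨h1, h2⟩
    have h1' : ∀ y : G, A (adjoint B y) = B (adjoint A y) := by
      intro y
      have := DFunLike.congr_fun h1 y
      simpa using this
    apply le_antisymm
    · -- relAdjoint ⊆ Λ
      intro p hp
      rw [hmem]
      have key : ∀ y : G, (inner ℂ (A p.1 - B p.2) y : ℂ) = 0 := by
        intro y
        have hq : ((adjoint B y, adjoint A y) : G × G) ∈ LambdaAB A B := by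
          rw [hmem]; exact h1' y
        have := hp _ hq
        simp only [adjoint_inner_right] at this
        rw [inner_sub_left, this, sub_self]
      have := key (A p.1 - B p.2)
      rw [inner_self_eq_zero] at this
      exact sub_eq_zero.mp this
    · -- Λ ⊆ relAdjoint : needs Hilbert space argument on WithLp 2 (G × G)
      intro p hp
      rw [hmem] at hp
      set e := (WithLp.prodContinuousLinearEquiv 2 ℂ G G : WithLp 2 (G × G) ≃L[ℂ] G × G) with he
      let N : G →ₗ[ℂ] WithLp 2 (G × G) :=
        ((e.symm : (G × G) →L[ℂ] WithLp 2 (G × G)).comp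
          ((adjoint B).prod (adjoint A))).toLinearMap
      have hNapp : ∀ y : G, N y = e.symm (adjoint B y, adjoint A y) := fun y => rfl
      set V := (LinearMap.range N).topologicalClosure with hV
      haveI : CompleteSpace V := by
        have : IsClosed (V : Set (WithLp 2 (G × G))) :=
          Submodule.isClosed_topologicalClosure _
        exact this.completeSpace_coe
      obtain ⟨v, hv, w, hw, hvw⟩ := V.exists_add_mem_mem_orthogonal (e.symm p)
      -- every element of V is in Λ (after applying e)
      have hVΛ : ∀ z ∈ (V : Set (WithLp 2 (G × G))), A (e z).1 = B (e z).2 := by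
        have hclosed : IsClosed {z : WithLp 2 (G × G) | A (e z).1 = B (e z).2} := by
          apply isClosed_eq
          · exact A.continuous.comp (continuous_fst.comp e.continuous)
          · exact B.continuous.comp (continuous_snd.comp e.continuous)
        have hsub : (LinearMap.range N : Set (WithLp 2 (G × G))) ⊆
            {z : WithLp 2 (G × G) | A (e z).1 = B (e z).2} := by
          rintro _ ⟨y, rfl⟩
          show A (e (e.symm (adjoint B y, adjoint A y))).1 = B (e (e.symm _)).2
          rw [e.apply_symm_apply]
          exact h1' y
        rw [hV]
        rw [Submodule.topologicalClosure_coe]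
        exact closure_minimal hsub hclosed
      -- w is in ker M, hence zero
      have hpv : p = e v + e w := by
        conv_lhs => rw [← e.apply_symm_apply p, hvw]
        exact map_add e v w
      have hTw : A (e w).1 = B (e w).2 := by
        have hv' := hVΛ v hv
        have : A (e v).1 + A (e w).1 = B (e v).2 + B (e w).2 := by
          have := hp
          rw [hpv] at this
          simpa [map_add] using this
        rw [hv'] at this
        exact add_left_cancel this
      have hSw : B (e w).1 + A (e w).2 = 0 := by
        have key : ∀ y : G, (inner ℂ y (B (e w).1 + A (e w).2) : ℂ) = 0 := by
          intro y
          have hNy : N y ∈ V := (LinearMap.range N).le_topologicalClosure ⟨y, rfl⟩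
          have := (Submodule.mem_orthogonal V w).mp hw (N y) hNy
          have h5 : (inner ℂ (adjoint B y) (e w).1 : ℂ) + inner ℂ (adjoint A y) (e w).2 = 0 := by
            rw [← this]
            rfl
          simp only [adjoint_inner_left] at h5
          rw [inner_add_right]
          exact h5
        have := key (B (e w).1 + A (e w).2)
        rwa [inner_self_eq_zero] at this
      have hwz : w = 0 := by
        have : MAB A B (e w) = 0 := by
          rw [hMAB]
          rw [Prod.ext_iff]
          constructor
          · simpa [sub_eq_zero] using hTw
          · simpa using hSw
        have := h2 _ this
        have : e w = e 0 := by simpa using this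
        exact e.injective this
      have hpV : e.symm p ∈ V := by
        rw [hvw, hwz, add_zero]; exact hv
      -- conclude: the adjoint-relation condition holds on the closure of range N
      intro q hq
      rw [hmem] at hq
      let f : WithLp 2 (G × G) → ℂ := fun z => inner ℂ (e z).1 q.2 - inner ℂ (e z).2 q.1
      have hfc : Continuous f := by
        apply Continuous.sub
        · exact Continuous.inner (continuous_fst.comp e.continuous) continuous_const
        · exact Continuous.inner (continuous_snd.comp e.continuous) continuous_const
      have hf0 : Set.EqOn f 0 (LinearMap.range N : Set (WithLp 2 (G × G))) := by
        rintro x ⟨y, rfl⟩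
        show (inner ℂ (e (N y)).1 q.2 : ℂ) - inner ℂ (e (N y)).2 q.1 = 0
        rw [hNapp y, e.apply_symm_apply]
        simp only [adjoint_inner_left, hq, sub_self]
      have hfcl : Set.EqOn f 0 (closure (LinearMap.range N : Set (WithLp 2 (G × G)))) :=
        hf0.closure hfc continuous_const
      have : f (e.symm p) = 0 := by
        apply hfcl
        rw [← Submodule.topologicalClosure_coe]
        exact hpV
      have : (inner ℂ p.1 q.2 : ℂ) - inner ℂ p.2 q.1 = 0 := by
        have h6 : f (e.symm p) = (inner ℂ p.1 q.2 : ℂ) - inner ℂ p.2 q.1 := by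
          show (inner ℂ (e (e.symm p)).1 q.2 : ℂ) - inner ℂ (e (e.symm p)).2 q.1 = _
          rw [e.apply_symm_apply]
        rw [h6] at this
        exact this
      exact sub_eq_zero.mp this
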